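/- Let R = ⊕_{i∈ℕ} R_i be a homogeneous Noetherian graded ring with irrelevant ideal R_+, assume the degree-zero subring (R_0, m_0) is local, and set m* = m_0R + R_+. Let M = ⊕_{i∈ℤ} M_i be a ℤ-graded R-module such that each component M_i is a finitely generated R_0-module. If M/m*M is an Artinian R-module, then M is tame: there exists n_0 such that either M_n = 0 for all n ≤ n_0 or M_n ≠ 0 for all n ≤ n_0. -/

import Mathlib

universe u

set_option linter.unusedSectionVars false

section Aux

variable {R₀ R M : Type u} [CommRing R₀] [CommRing R] [Algebra R₀ R]
    (𝒜 : ℕ → Submodule R₀ R) [GradedAlgebra 𝒜]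
    [AddCommGroup M] [Module R M] [Module R₀ M] [IsScalarTower R₀ R M]
    (ℳ : ℤ → Submodule R₀ M) [DirectSum.Decomposition ℳ]

/-- The degree-`n` projection of `M`, as an `R₀`-linear map. -/
noncomputable def projL (n : ℤ) : M →ₗ[R₀] M :=
  (ℳ n).subtype ∘ₗ (DirectSum.component R₀ ℤ (fun i => ℳ i) n) ∘ₗ
    (DirectSum.decomposeLinearEquiv ℳ).toLinearMap

lemma projL_apply (n : ℤ) (x : M) : projL ℳ n x = (DirectSum.decompose ℳ x n : M) := rfl

lemma projL_mem (n : ℤ) (x : M) : projL ℳ n x ∈ ℳ n := (DirectSum.decompose ℳ x n).2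

lemma projL_of_mem_same {n : ℤ} {x : M} (h : x ∈ ℳ n) : projL ℳ n x = x :=
  DirectSum.decompose_of_mem_same ℳ h

lemma projL_of_mem_ne {m n : ℤ} {x : M} (h : x ∈ ℳ m) (hmn : m ≠ n) : projL ℳ n x = 0 :=
  DirectSum.decompose_of_mem_ne ℳ h hmn

lemma projL_smul_hom
    (hsmul : ∀ (i : ℕ) (j : ℤ) (r : R) (m : M), r ∈ 𝒜 i → m ∈ ℳ j → r • m ∈ ℳ ((i : ℤ) + j))
    {i : ℕ} {r : R} (hr : r ∈ 𝒜 i) (x : M) (n : ℤ) :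
    projL ℳ n (r • x) = r • projL ℳ (n - i) x := by
  induction x using DirectSum.Decomposition.inductionOn ℳ with
  | zero => simp
  | @homogeneous j m =>
    obtain ⟨x, hx⟩ := m
    by_cases h : n = (i : ℤ) + j
    · subst h
      rw [projL_of_mem_same ℳ (hsmul i j r x hr hx),
        show (i : ℤ) + j - i = j by ring, projL_of_mem_same ℳ hx]
    · rw [projL_of_mem_ne ℳ (hsmul i j r x hr hx) (fun hh => h hh.symm)]
      rw [projL_of_mem_ne ℳ hx (fun hh => h (by omega)), smul_zero]
  | add a b ha hb => rw [smul_add, map_add, ha, hb, map_add, smul_add]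


/-- The span of products of a degree-one element with an element of degree `n-1`. -/
def Spos (n : ℤ) : Submodule R₀ M :=
  Submodule.span R₀ {z : M | ∃ r ∈ 𝒜 1, ∃ y ∈ ℳ (n - 1), z = r • y}

lemma smul_mem_Spos
    (hhom : ∀ n : ℕ, 𝒜 (n + 1) = 𝒜 1 * 𝒜 n)
    (hsmul : ∀ (i : ℕ) (j : ℤ) (r : R) (m : M), r ∈ 𝒜 i → m ∈ ℳ j → r • m ∈ ℳ ((i : ℤ) + j))
    {i : ℕ} (hi : 1 ≤ i) {r : R} (hr : r ∈ 𝒜 i) {y : M} {m : ℤ} (hy : y ∈ ℳ m) :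
    r • y ∈ Spos 𝒜 ℳ ((i : ℤ) + m) := by
  obtain ⟨k, rfl⟩ : ∃ k, i = k + 1 := ⟨i - 1, by omega⟩
  rw [hhom k] at hr
  refine Submodule.mul_induction_on hr (fun b hb c hc => ?_) (fun a₁ a₂ h₁ h₂ => ?_)
  · have hcy : c • y ∈ ℳ ((k : ℤ) + m) := hsmul k m c y hc hy
    rw [mul_smul]
    exact Submodule.subset_span ⟨b, hb, c • y, by
      convert hcy using 2; push_cast; ring, rfl⟩
  · rw [add_smul]
    exact Submodule.add_mem _ h₁ h₂

lemma Spos_eq_bot {n : ℤ} (hbot : ℳ (n - 1) = ⊥) : Spos 𝒜 ℳ n = ⊥ := by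
  rw [Spos, Submodule.span_eq_bot]
  rintro z ⟨r, hr, y, hy, rfl⟩
  rw [hbot, Submodule.mem_bot] at hy
  simp [hy]

/-- For fixed target degree `n`, the set of `x` whose degree-`n` component lies in
`I₀ • ℳ n ⊔ Spos n` is an `R`-submodule. -/
noncomputable def Tsub
    (hhom : ∀ n : ℕ, 𝒜 (n + 1) = 𝒜 1 * 𝒜 n)
    (hsmul : ∀ (i : ℕ) (j : ℤ) (r : R) (m : M), r ∈ 𝒜 i → m ∈ ℳ j → r • m ∈ ℳ ((i : ℤ) + j))
    (h0 : 𝒜 0 = 1) (I₀ : Ideal R₀) (n : ℤ) : Submodule R M where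
  carrier := {x : M | projL ℳ n x ∈ I₀ • ℳ n ⊔ Spos 𝒜 ℳ n}
  add_mem' := fun ha hb => by simpa [map_add] using Submodule.add_mem _ ha hb
  zero_mem' := by simp
  smul_mem' := by
    intro r x hx
    classical
    simp only [Set.mem_setOf_eq] at hx ⊢
    rw [show r • x = ∑ i ∈ (DirectSum.decompose 𝒜 r).support,
        (DirectSum.decompose 𝒜 r i : R) • x from by
      rw [← Finset.sum_smul, DirectSum.sum_support_decompose], map_sum]
    refine Submodule.sum_mem _ fun i hi => ?_
    rw [projL_smul_hom 𝒜 ℳ hsmul (DirectSum.decompose 𝒜 r i).2]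
    rcases Nat.eq_zero_or_pos i with h0 | h1
    · subst h0
      obtain ⟨c, hc⟩ := Submodule.mem_one.mp
        (show ((DirectSum.decompose 𝒜 r 0 : R) ∈ (1 : Submodule R₀ R)) from
          h0 ▸ (DirectSum.decompose 𝒜 r 0).2)
      rw [← hc, algebraMap_smul]
      simpa using Submodule.smul_mem _ c hx
    · refine Submodule.mem_sup_right ?_
      have := smul_mem_Spos 𝒜 ℳ hhom hsmul h1 (DirectSum.decompose 𝒜 r i).2
        (projL_mem ℳ (n - i) x)
      simpa [show (i : ℤ) + (n - i) = n by ring] using this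


lemma mem_Tsub
    (hhom : ∀ n : ℕ, 𝒜 (n + 1) = 𝒜 1 * 𝒜 n)
    (hsmul : ∀ (i : ℕ) (j : ℤ) (r : R) (m : M), r ∈ 𝒜 i → m ∈ ℳ j → r • m ∈ ℳ ((i : ℤ) + j))
    (h0 : 𝒜 0 = 1) (I₀ : Ideal R₀) (n : ℤ) (x : M) :
    x ∈ Tsub 𝒜 ℳ hhom hsmul h0 I₀ n ↔ projL ℳ n x ∈ I₀ • ℳ n ⊔ Spos 𝒜 ℳ n := Iff.rfl

lemma irrelevant_smul_proj_mem_Spos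
    (hhom : ∀ n : ℕ, 𝒜 (n + 1) = 𝒜 1 * 𝒜 n)
    (hsmul : ∀ (i : ℕ) (j : ℤ) (r : R) (m : M), r ∈ 𝒜 i → m ∈ ℳ j → r • m ∈ ℳ ((i : ℤ) + j))
    {c : R} (hc : c ∈ (HomogeneousIdeal.irrelevant 𝒜).toIdeal) (x : M) (n : ℤ) :
    projL ℳ n (c • x) ∈ Spos 𝒜 ℳ n := by
  classical
  rw [show c • x = ∑ i ∈ (DirectSum.decompose 𝒜 c).support,
      (DirectSum.decompose 𝒜 c i : R) • x from by
    rw [← Finset.sum_smul, DirectSum.sum_support_decompose], map_sum]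
  refine Submodule.sum_mem _ fun i hi => ?_
  rw [projL_smul_hom 𝒜 ℳ hsmul (DirectSum.decompose 𝒜 c i).2]
  rcases Nat.eq_zero_or_pos i with h0 | h1
  · subst h0
    have : (DirectSum.decompose 𝒜 c 0 : R) = 0 := by
      have := (HomogeneousIdeal.mem_irrelevant_iff 𝒜 c).mp hc
      rwa [GradedRing.proj_apply] at this
    rw [this, zero_smul]
    exact Submodule.zero_mem _
  · have := smul_mem_Spos 𝒜 ℳ hhom hsmul h1 (DirectSum.decompose 𝒜 c i).2
      (projL_mem ℳ (n - i) x)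
    simpa [show (i : ℤ) + (n - i) = n by ring] using this

lemma K_le_Tsub
    (hhom : ∀ n : ℕ, 𝒜 (n + 1) = 𝒜 1 * 𝒜 n)
    (hsmul : ∀ (i : ℕ) (j : ℤ) (r : R) (m : M), r ∈ 𝒜 i → m ∈ ℳ j → r • m ∈ ℳ ((i : ℤ) + j))
    (h0 : 𝒜 0 = 1) (I₀ : Ideal R₀) (n : ℤ) :
    (Ideal.map (algebraMap R₀ R) I₀ + (HomogeneousIdeal.irrelevant 𝒜).toIdeal) •
      (⊤ : Submodule R M) ≤ Tsub 𝒜 ℳ hhom hsmul h0 I₀ n := by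
  refine Submodule.smul_le.mpr fun a ha m _ => ?_
  rw [Submodule.add_eq_sup, Submodule.mem_sup] at ha
  obtain ⟨b, hb, c, hc, rfl⟩ := ha
  rw [add_smul]
  refine Submodule.add_mem _ ?_ ?_
  · -- b ∈ Ideal.map (algebraMap R₀ R) I₀
    refine Submodule.span_induction
      (p := fun b _ => ∀ m : M, b • m ∈ Tsub 𝒜 ℳ hhom hsmul h0 I₀ n) ?_ ?_ ?_ ?_ hb m
    · rintro _ ⟨c₀, hc₀, rfl⟩ m
      rw [mem_Tsub, algebraMap_smul, map_smul]
      exact Submodule.mem_sup_left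
        (Submodule.smul_mem_smul hc₀ (projL_mem ℳ n m))
    · intro m
      rw [zero_smul]
      exact Submodule.zero_mem _
    · intro a₁ a₂ _ _ h₁ h₂ m
      rw [add_smul]
      exact Submodule.add_mem _ (h₁ m) (h₂ m)
    · intro r a _ h m
      rw [smul_eq_mul, mul_smul]
      exact Submodule.smul_mem _ r (h m)
  · rw [mem_Tsub]
    exact Submodule.mem_sup_right (irrelevant_smul_proj_mem_Spos 𝒜 ℳ hhom hsmul hc m n)

end Aux

/-- **Lemma 4.2(ii).** Let `R = ⊕_{i∈ℕ} R_i` be a homogeneous Noetherian graded ring with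
irrelevant ideal `R₊`, where `(R₀, m₀)` is local, and set `m* = m₀R + R₊`.  Let
`M = ⊕_{i∈ℤ} M_i` be a `ℤ`-graded `R`-module each of whose components is a finitely generated
`R₀`-module.  If `M/m*M` is Artinian, then `M` is tame. -/
theorem stmt10 {R₀ R M : Type u} [CommRing R₀] [IsLocalRing R₀] [CommRing R] [Algebra R₀ R]
    [IsNoetherianRing R]
    (𝒜 : ℕ → Submodule R₀ R) [GradedAlgebra 𝒜]
    -- `R₀` is (isomorphic to) the degree-zero part of `R`:
    (hinj : Function.Injective (algebraMap R₀ R)) (h0 : 𝒜 0 = 1)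
    -- `R` is homogeneous, i.e. generated in degree one over `R₀`:
    (hhom : ∀ n : ℕ, 𝒜 (n + 1) = 𝒜 1 * 𝒜 n)
    [AddCommGroup M] [Module R M] [Module R₀ M] [IsScalarTower R₀ R M]
    -- `M` is a `ℤ`-graded `R`-module:
    (ℳ : ℤ → Submodule R₀ M) [DirectSum.Decomposition ℳ]
    (hsmul : ∀ (i : ℕ) (j : ℤ) (r : R) (m : M),
      r ∈ 𝒜 i → m ∈ ℳ j → r • m ∈ ℳ ((i : ℤ) + j))
    -- each component `M_i` is a finitely generated `R₀`-module:
    (hfg : ∀ i : ℤ, (ℳ i).FG)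
    -- `M/m*M` is Artinian, where `m* = m₀R + R₊`:
    (hart : IsArtinian R
      (M ⧸ ((Ideal.map (algebraMap R₀ R) (IsLocalRing.maximalIdeal R₀) +
        (HomogeneousIdeal.irrelevant 𝒜).toIdeal) • (⊤ : Submodule R M)))) :
    -- then `M` is tame:
    ∃ n₀ : ℤ, (∀ n ≤ n₀, ℳ n = ⊥) ∨ (∀ n ≤ n₀, ℳ n ≠ ⊥) := by
  classical
  set I₀ : Ideal R₀ := IsLocalRing.maximalIdeal R₀ with hI₀
  set K : Submodule R M :=
    (Ideal.map (algebraMap R₀ R) I₀ + (HomogeneousIdeal.irrelevant 𝒜).toIdeal) •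
      (⊤ : Submodule R M) with hK
  haveI : IsArtinian R (M ⧸ K) := hart
  set L : ℤ → Submodule R M :=
    fun c => Submodule.span R (⋃ m ∈ {m : ℤ | m ≤ c}, (ℳ m : Set M)) with hL
  have hLmono : ∀ {c c' : ℤ}, c ≤ c' → L c ≤ L c' := by
    intro c c' h
    refine Submodule.span_mono (Set.biUnion_subset_biUnion_left ?_)
    intro m hm; exact le_trans hm h
  have hLmem : ∀ {m c : ℤ}, m ≤ c → (ℳ m : Set M) ⊆ (L c : Set M) := by
    intro m c h
    refine subset_trans ?_ Submodule.subset_span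
    exact Set.subset_biUnion_of_mem (u := fun m => (ℳ m : Set M)) h
  -- the descending chain
  set f : ℕ →o (Submodule R (M ⧸ K))ᵒᵈ :=
    ⟨fun k => Submodule.map K.mkQ (K ⊔ L (-(k : ℤ))),
      fun k k' h => Submodule.map_mono (sup_le_sup_left (hLmono (by omega)) K)⟩ with hf
  obtain ⟨k₀, hk₀⟩ := IsArtinian.monotone_stabilizes f
  have hstab : ∀ m : ℕ, k₀ ≤ m → K ⊔ L (-(m : ℤ)) = K ⊔ L (-(m : ℤ) - 1) := by
    intro m hm
    have h1 : f m = f (m + 1) := (hk₀ m hm).symm.trans (hk₀ (m + 1) (by omega))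
    have h2 := congrArg (Submodule.comap K.mkQ) h1
    simp only [hf, OrderHom.coe_mk, Submodule.comap_map_mkQ] at h2
    change Submodule.comap K.mkQ (Submodule.map K.mkQ (K ⊔ L (-(m : ℤ)))) =
      Submodule.comap K.mkQ (Submodule.map K.mkQ (K ⊔ L (-((m + 1 : ℕ) : ℤ)))) at h2
    simp only [Submodule.comap_map_mkQ] at h2
    have e : -((m : ℤ) + 1) = -(m : ℤ) - 1 := by ring
    rw [← sup_assoc, sup_idem, ← sup_assoc, sup_idem] at h2
    simpa [e] using h2
  have hkey : ∀ n : ℤ, n ≤ -(k₀ : ℤ) → (ℳ n : Set M) ⊆ (K ⊔ L (n - 1) : Submodule R M) := by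
    intro n hn
    set m : ℕ := (-n).toNat with hm
    have hmn : -(m : ℤ) = n := by omega
    have h1 : (ℳ n : Set M) ⊆ (L (-(m : ℤ)) : Set M) := by rw [hmn]; exact hLmem le_rfl
    have h2 : K ⊔ L (-(m : ℤ)) = K ⊔ L (n - 1) := by
      rw [hstab m (by omega)]; congr 1; congr 1; omega
    intro x hx
    have : x ∈ (K ⊔ L (-(m : ℤ)) : Submodule R M) :=
      Submodule.mem_sup_right (h1 hx)
    rwa [h2] at this
  -- degree-wise consequence
  have hQ : ∀ n : ℤ, n ≤ -(k₀ : ℤ) → ℳ n ≤ I₀ • ℳ n ⊔ Spos 𝒜 ℳ n := by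
    intro n hn x hx
    have hT : (K ⊔ L (n - 1) : Submodule R M) ≤ Tsub 𝒜 ℳ hhom hsmul h0 I₀ n := by
      refine sup_le (K_le_Tsub 𝒜 ℳ hhom hsmul h0 I₀ n) ?_
      rw [hL, Submodule.span_le]
      intro y hy
      obtain ⟨s, ⟨mdeg, rfl⟩, hy⟩ := hy
      simp only [Set.mem_iUnion, SetLike.mem_coe, exists_prop] at hy
      obtain ⟨hmdeg, hymem⟩ := hy
      have hmle : mdeg ≤ n - 1 := hmdeg
      have : projL ℳ n y = 0 := projL_of_mem_ne ℳ hymem (by omega)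
      show y ∈ Tsub 𝒜 ℳ hhom hsmul h0 I₀ n
      rw [mem_Tsub, this]
      exact Submodule.zero_mem _
    have hx' := hT (hkey n hn hx)
    rw [mem_Tsub, projL_of_mem_same ℳ hx] at hx'
    exact hx'
  -- vanishing propagates upwards
  have hstep : ∀ n : ℤ, n ≤ -(k₀ : ℤ) → ℳ (n - 1) = ⊥ → ℳ n = ⊥ := by
    intro n hn hbot
    have h1 : ℳ n ≤ I₀ • ℳ n := by
      have := hQ n hn
      rwa [Spos_eq_bot 𝒜 ℳ hbot, sup_bot_eq] at this
    exact Submodule.eq_bot_of_le_smul_of_le_jacobson_bot I₀ (ℳ n) (hfg n) h1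
      (IsLocalRing.maximalIdeal_le_jacobson ⊥)
  -- conclude tameness
  by_cases hA : ∃ p ≤ -(k₀ : ℤ), ℳ p ≠ ⊥
  · obtain ⟨p, hp, hpne⟩ := hA
    refine ⟨p, Or.inr ?_⟩
    have hdown : ∀ d : ℕ, ℳ (p - d) ≠ ⊥ := by
      intro d
      induction d with
      | zero => simpa using hpne
      | succ d ih =>
        intro hbot
        apply ih
        have : (p - (d : ℤ)) - 1 = p - ((d : ℕ) + 1 : ℕ) := by push_cast; ring
        exact hstep (p - d) (by omega) (by rw [this]; exact hbot)
    intro q hq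
    have := hdown (p - q).toNat
    rwa [show p - ((p - q).toNat : ℤ) = q by omega] at this
  · push_neg at hA
    exact ⟨-(k₀ : ℤ), Or.inl hA⟩
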